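/- Suppose 𝔈_1 : (Λ,∞) → ℝ satisfies 𝔈_1(2λ) = 𝔈_1(λ)(1 + (Δ_1/Δ_3)e^{−λ}) for all λ > Λ, together with the bound |𝔈_1(λ)| ≤ c e^{−λ} for λ > Λ, where Δ_1, Δ_3 ∈ (0,1), c > 0, and Λ > −2 ln Δ_3. Then 𝔈_1(λ) = 0 for all λ > Λ. -/

import Mathlib

/-- Uniqueness step: if `𝔈₁(2λ) = 𝔈₁(λ)(1 + (Δ₁/Δ₃)e^{-λ})` for `λ > Λ`,
`|𝔈₁(λ)| ≤ c e^{-λ}` for `λ > Λ`, with `Δ₁, Δ₃ ∈ (0,1)`, `c > 0` and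
`Λ > -2 ln Δ₃`, then `𝔈₁` vanishes identically on `(Λ, ∞)`. -/
theorem homogeneous_equation_trivial (E₁ : ℝ → ℝ) (Δ₁ Δ₃ c Λ : ℝ)
    (hΔ₁ : Δ₁ ∈ Set.Ioo (0:ℝ) 1) (hΔ₃ : Δ₃ ∈ Set.Ioo (0:ℝ) 1)
    (hc : 0 < c) (hΛ : -2 * Real.log Δ₃ < Λ)
    (heq : ∀ lam : ℝ, Λ < lam →
      E₁ (2 * lam) = E₁ lam * (1 + (Δ₁ / Δ₃) * Real.exp (-lam)))
    (hbd : ∀ lam : ℝ, Λ < lam → |E₁ lam| ≤ c * Real.exp (-lam)) :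
    ∀ lam : ℝ, Λ < lam → E₁ lam = 0 := by
  have hΛ0 : 0 < Λ := by
    have : Real.log Δ₃ < 0 := Real.log_neg hΔ₃.1 hΔ₃.2
    nlinarith
  -- Step: |E₁ λ| ≤ |E₁ (2λ)| for λ > Λ
  have step : ∀ lam : ℝ, Λ < lam → |E₁ lam| ≤ |E₁ (2 * lam)| := by
    intro lam hlam
    rw [heq lam hlam, abs_mul]
    have h1 : (1:ℝ) ≤ 1 + (Δ₁ / Δ₃) * Real.exp (-lam) := by
      have := Real.exp_pos (-lam)
      have := div_pos hΔ₁.1 hΔ₃.1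
      nlinarith
    calc |E₁ lam| = |E₁ lam| * 1 := by ring
    _ ≤ |E₁ lam| * |1 + (Δ₁ / Δ₃) * Real.exp (-lam)| := by
        apply mul_le_mul_of_nonneg_left _ (abs_nonneg _)
        rw [abs_of_nonneg (by linarith)]; exact h1
  -- Induction: |E₁ λ| ≤ c * exp(-λ)^(2^n)
  have key : ∀ n : ℕ, ∀ lam : ℝ, Λ < lam →
      |E₁ lam| ≤ c * Real.exp (-lam) ^ (2 ^ n) := by
    intro n
    induction n with
    | zero => intro lam hlam; simpa using hbd lam hlam
    | succ n ih =>
      intro lam hlam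
      have h2 : Λ < 2 * lam := by linarith
      have := (step lam hlam).trans (ih (2 * lam) h2)
      calc |E₁ lam| ≤ c * Real.exp (-(2 * lam)) ^ (2 ^ n) := this
      _ = c * Real.exp (-lam) ^ (2 ^ (n + 1)) := by
          rw [← Real.exp_nat_mul, ← Real.exp_nat_mul]
          congr 1
          push_cast
          ring
  intro lam hlam
  have hr1 : Real.exp (-lam) < 1 := by
    rw [Real.exp_lt_one_iff]; linarith
  have hr0 : 0 ≤ Real.exp (-lam) := (Real.exp_pos _).le
  have hb : ∀ n : ℕ, |E₁ lam| ≤ c * Real.exp (-lam) ^ n := by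
    intro n
    exact (key n lam hlam).trans (by
      apply mul_le_mul_of_nonneg_left _ hc.le
      exact pow_le_pow_of_le_one hr0 hr1.le (Nat.lt_two_pow_self (n := n)).le)
  have htend : Filter.Tendsto (fun n : ℕ => c * Real.exp (-lam) ^ n)
      Filter.atTop (nhds 0) := by
    simpa using (tendsto_pow_atTop_nhds_zero_of_lt_one hr0 hr1).const_mul c
  have : |E₁ lam| ≤ 0 := ge_of_tendsto' htend hb
  exact abs_eq_zero.mp (le_antisymm this (abs_nonneg _))
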